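/- (Maximal connectedness, three-qudit instance) Let φ be the one-dimensional 3-qudit cluster state and, for s ∈ ℤ/dℤ, let |x(s)⟩ = d^{−1/2} Σ_k ω^{sk} e_k. Then projecting the middle qudit onto |x(s)⟩ yields a maximally entangled state of qudits 1 and 3: the partial inner product ⟨x(s)|₂ φ equals d^{−1} Σ_{k∈ℤ/dℤ} e_k ⊗ e_{s−k}, a nonzero vector whose normalization is maximally entangled (its reduced density matrix on either factor is I/d). -/

import Mathlib

open Matrix

/-- ω = exp(2πi/d), a primitive d-th root of unity. -/
noncomputable def qomega (d : ℕ) : ℂ := Complex.exp (2 * Real.pi * Complex.I / d)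

/-- The one-dimensional `N`-qudit cluster state,
`φ(k₁,…,k_N) = d^{−N/2} ω^{∑_{a=1}^{N−1} k_a k_{a+1}}`. -/
noncomputable def clusterChain (d N : ℕ) [NeZero d] : (Fin N → ZMod d) → ℂ :=
  fun k => (Real.sqrt ((d : ℝ) ^ N))⁻¹ *
    qomega d ^ (∑ i : Fin (N - 1),
      (k ⟨i.val, Nat.lt_of_lt_of_le i.isLt (Nat.sub_le N 1)⟩).val *
      (k ⟨i.val + 1, Nat.add_lt_of_lt_sub i.isLt⟩).val)

/-- `|x(s)⟩ = d^{-1/2} ∑_k ω^{sk} e_k`. -/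
noncomputable def xvec (d : ℕ) [NeZero d] (s : ZMod d) : ZMod d → ℂ :=
  fun k => (Real.sqrt d)⁻¹ * qomega d ^ (s.val * k.val)

/-- The partial inner product `⟨x(s)|₂ φ` of the middle qudit of the 3-qudit cluster
state: a vector on qudits 1 and 3. -/
noncomputable def projectedMiddle (d : ℕ) [NeZero d] (s : ZMod d) :
    (ZMod d × ZMod d) → ℂ :=
  fun p => ∑ k₂ : ZMod d,
    star (xvec d s k₂) * clusterChain d 3 ![p.1, k₂, p.2]

lemma qomega_prim (d : ℕ) [NeZero d] : IsPrimitiveRoot (qomega d) d :=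
  Complex.isPrimitiveRoot_exp d (NeZero.ne d)

lemma qomega_pow_d (d : ℕ) [NeZero d] : qomega d ^ d = 1 := (qomega_prim d).pow_eq_one

lemma qomega_conj (d : ℕ) [NeZero d] : star (qomega d) = (qomega d)⁻¹ := by
  unfold qomega
  rw [Complex.star_def, ← Complex.exp_conj, ← Complex.exp_neg]
  congr 1
  simp [map_div₀, _root_.map_mul, Complex.conj_I, Complex.conj_ofReal, map_ofNat]
  ring

lemma qomega_star_pow (d : ℕ) [NeZero d] (n : ℕ) :
    star (qomega d ^ n) = qomega d ^ ((d - 1) * n) := by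
  rw [star_pow, qomega_conj, inv_pow]
  symm
  apply eq_inv_of_mul_eq_one_left
  rw [← pow_add]
  have h : (d - 1) * n + n = d * n := by
    rw [Nat.sub_mul, one_mul,
      Nat.sub_add_cancel (Nat.le_mul_of_pos_left n (Nat.pos_of_ne_zero (NeZero.ne d)))]
  rw [h, pow_mul, qomega_pow_d, one_pow]

lemma charsum (d : ℕ) [NeZero d] (m : ℕ) :
    ∑ k : ZMod d, qomega d ^ (m * k.val) = if (m : ZMod d) = 0 then (d : ℂ) else 0 := by
  have hsum : ∑ k : ZMod d, qomega d ^ (m * k.val)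
      = ∑ i ∈ Finset.range d, (qomega d ^ m) ^ i := by
    refine Finset.sum_nbij' (fun k : ZMod d => k.val) (fun i : ℕ => (i : ZMod d))
      ?_ ?_ ?_ ?_ ?_
    · intro k _; exact Finset.mem_range.mpr (ZMod.val_lt k)
    · intro i _; exact Finset.mem_univ _
    · intro k _; exact ZMod.natCast_zmod_val k
    · intro i hi; exact ZMod.val_cast_of_lt (Finset.mem_range.mp hi)
    · intro k _; rw [← pow_mul]
  rw [hsum]
  by_cases hdvd : (m : ZMod d) = 0
  · rw [if_pos hdvd]
    have : qomega d ^ m = 1 :=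
      ((qomega_prim d).pow_eq_one_iff_dvd m).mpr ((ZMod.natCast_eq_zero_iff m d).mp hdvd)
    simp [this]
  · rw [if_neg hdvd]
    have hne : qomega d ^ m ≠ 1 := fun h => hdvd
      ((ZMod.natCast_eq_zero_iff m d).mpr (((qomega_prim d).pow_eq_one_iff_dvd m).mp h))
    rw [geom_sum_eq hne]
    rw [← pow_mul, mul_comm, pow_mul, qomega_pow_d, one_pow]
    simp

lemma proj_eq (d : ℕ) [NeZero d] (s : ZMod d) :
    projectedMiddle d s
      = (fun p : ZMod d × ZMod d => if p.2 = s - p.1 then ((d : ℂ))⁻¹ else 0) := by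
  have hd0 : (d : ℂ) ≠ 0 := Nat.cast_ne_zero.mpr (NeZero.ne d)
  funext p
  obtain ⟨a, b⟩ := p
  have hcc : ∀ k : ZMod d, clusterChain d 3 ![a, k, b]
      = (((Real.sqrt ((d:ℝ)^3))⁻¹ : ℝ) : ℂ) * qomega d ^ (a.val * k.val + k.val * b.val) :=
    fun k => by unfold clusterChain; congr 1
  have hconst : (((Real.sqrt d)⁻¹ : ℝ) : ℂ) * (((Real.sqrt ((d:ℝ)^3))⁻¹ : ℝ) : ℂ)
      = ((d:ℂ)^2)⁻¹ := by
    rw [Complex.ofReal_inv, Complex.ofReal_inv, ← mul_inv, ← Complex.ofReal_mul,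
      ← Real.sqrt_mul (by positivity),
      show (d:ℝ) * (d:ℝ)^3 = ((d:ℝ)^2)^2 by ring, Real.sqrt_sq (by positivity)]
    push_cast
    ring
  have step : projectedMiddle d s (a, b)
      = ((d:ℂ)^2)⁻¹ * ∑ k : ZMod d,
          qomega d ^ (((d - 1) * s.val + (a.val + b.val)) * k.val) := by
    unfold projectedMiddle xvec
    rw [Finset.mul_sum]
    refine Finset.sum_congr rfl fun k _ => ?_
    rw [hcc k, star_mul', qomega_star_pow]
    have hsr : star ((((Real.sqrt d)⁻¹ : ℝ)) : ℂ) = (((Real.sqrt d)⁻¹ : ℝ) : ℂ) := by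
      rw [Complex.star_def, Complex.conj_ofReal]
    rw [hsr]
    have hexp : (d - 1) * (s.val * k.val) + (a.val * k.val + k.val * b.val)
        = ((d - 1) * s.val + (a.val + b.val)) * k.val := by ring
    calc (((Real.sqrt d)⁻¹ : ℝ) : ℂ) * qomega d ^ ((d-1) * (s.val * k.val))
          * ((((Real.sqrt ((d:ℝ)^3))⁻¹ : ℝ) : ℂ) * qomega d ^ (a.val * k.val + k.val * b.val))
        = ((((Real.sqrt d)⁻¹ : ℝ) : ℂ) * (((Real.sqrt ((d:ℝ)^3))⁻¹ : ℝ) : ℂ))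
          * (qomega d ^ ((d-1) * (s.val * k.val)) * qomega d ^ (a.val * k.val + k.val * b.val)) := by
          ring
      _ = ((d:ℂ)^2)⁻¹ * qomega d ^ (((d - 1) * s.val + (a.val + b.val)) * k.val) := by
          rw [hconst, ← pow_add, hexp]
  rw [step, charsum]
  have hcast : (((d - 1) * s.val + (a.val + b.val) : ℕ) : ZMod d) = -s + a + b := by
    push_cast [Nat.cast_sub (Nat.one_le_iff_ne_zero.mpr (NeZero.ne d)),
      ZMod.natCast_zmod_val, ZMod.natCast_self]
    ring
  rw [hcast]
  have hiff : (-s + a + b = 0) ↔ (b = s - a) := by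
    constructor
    · intro h; linear_combination h
    · intro h; linear_combination h
  by_cases hb : b = s - a
  · rw [if_pos (hiff.mpr hb)]
    simp only [hb, if_pos rfl, if_true]
    field_simp
  · rw [if_neg (fun h => hb (hiff.mp h)), if_neg hb, mul_zero]


/-- maximal connectedness, three-qudit instance: projecting the middle
qudit of the 3-qudit cluster state onto `|x(s)⟩` gives
`⟨x(s)|₂ φ = d^{−1} ∑_k e_k ⊗ e_{s−k}`, a nonzero vector whose normalization is
maximally entangled: both reduced density matrices equal `I/d`. -/
theorem three_qudit_maximal_connectedness (d : ℕ) [NeZero d] (hd : 2 ≤ d)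
    (s : ZMod d) :
    projectedMiddle d s
      = (fun p : ZMod d × ZMod d => if p.2 = s - p.1 then ((d : ℂ))⁻¹ else 0) ∧
    projectedMiddle d s ≠ 0 ∧
    (letI u : (ZMod d × ZMod d) → ℂ :=
      (Real.sqrt (∑ p : ZMod d × ZMod d, Complex.normSq (projectedMiddle d s p)) : ℂ)⁻¹
        • projectedMiddle d s
     (Matrix.of fun a b : ZMod d => ∑ c : ZMod d, u (a, c) * star (u (b, c)))
        = ((d : ℂ))⁻¹ • (1 : Matrix (ZMod d) (ZMod d) ℂ) ∧
     (Matrix.of fun a b : ZMod d => ∑ c : ZMod d, u (c, a) * star (u (c, b)))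
        = ((d : ℂ))⁻¹ • (1 : Matrix (ZMod d) (ZMod d) ℂ)) := by
  have hd0 : (d : ℂ) ≠ 0 := Nat.cast_ne_zero.mpr (NeZero.ne d)
  have hd0' : (d : ℝ) ≠ 0 := Nat.cast_ne_zero.mpr (NeZero.ne d)
  have h1 := proj_eq d s
  refine ⟨h1, ?_, ?_⟩
  · intro h0
    have h2 : projectedMiddle d s (0, s) = 0 := by rw [h0]; rfl
    rw [h1] at h2
    simp only [sub_zero, if_pos rfl] at h2
    exact hd0 (inv_eq_zero.mp h2)
  · rw [h1]
    have hS : (∑ p : ZMod d × ZMod d,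
        Complex.normSq (if p.2 = s - p.1 then ((d : ℂ))⁻¹ else 0)) = (d : ℝ)⁻¹ := by
      rw [Fintype.sum_prod_type]
      have : ∀ a : ZMod d, (∑ b : ZMod d,
          Complex.normSq (if b = s - a then ((d : ℂ))⁻¹ else 0)) = ((d:ℝ)^2)⁻¹ := by
        intro a
        rw [Finset.sum_eq_single (s - a)]
        · rw [if_pos rfl, map_inv₀, Complex.normSq_natCast, sq]
        · intro b _ hb; rw [if_neg hb, Complex.normSq_zero]
        · intro h; exact absurd (Finset.mem_univ _) h
      simp only [this, Finset.sum_const, Finset.card_univ, ZMod.card, nsmul_eq_mul]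
      rw [show ((d:ℝ)^2)⁻¹ = (d:ℝ)⁻¹ * (d:ℝ)⁻¹ by rw [sq, mul_inv],
        ← mul_assoc, mul_inv_cancel₀ hd0', one_mul]
    rw [hS]
    set t : ℂ := ((Real.sqrt ((d:ℝ)⁻¹) : ℝ) : ℂ)⁻¹ with ht
    have htt : t * t = (d : ℂ) := by
      rw [ht, ← mul_inv, ← Complex.ofReal_mul, Real.mul_self_sqrt (by positivity)]
      push_cast
      simp
    have hst : star t = t := by
      rw [ht, star_inv₀, Complex.star_def, Complex.conj_ofReal]
    constructor
    · ext a b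
      simp only [Matrix.of_apply, Pi.smul_apply, smul_eq_mul, Matrix.smul_apply,
        Matrix.one_apply]
      have hterm : ∀ c : ZMod d,
          t * (if c = s - a then ((d : ℂ))⁻¹ else 0)
            * star (t * (if c = s - b then ((d : ℂ))⁻¹ else 0))
          = (t * t) * ((if c = s - a then ((d : ℂ))⁻¹ else 0)
              * (if c = s - b then ((d : ℂ))⁻¹ else 0)) := by
        intro c
        rw [star_mul', hst]
        have : star (if c = s - b then ((d : ℂ))⁻¹ else 0)
            = (if c = s - b then ((d : ℂ))⁻¹ else 0) := by
          split
          · rw [star_inv₀, Complex.star_def, Complex.conj_natCast]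
          · exact star_zero _
        rw [this]; ring
      rw [Finset.sum_congr rfl (fun c _ => hterm c), ← Finset.mul_sum, htt]
      by_cases hab : a = b
      · subst hab
        rw [if_pos rfl]
        rw [Finset.sum_eq_single (s - a)]
        · rw [if_pos rfl, mul_one, ← mul_assoc, mul_inv_cancel₀ hd0, one_mul]
        · intro c _ hc; rw [if_neg hc, zero_mul]
        · intro h; exact absurd (Finset.mem_univ _) h
      · rw [if_neg hab]
        have hz : (∑ c : ZMod d, ((if c = s - a then ((d : ℂ))⁻¹ else 0)
            * (if c = s - b then ((d : ℂ))⁻¹ else 0))) = 0 := by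
          refine Finset.sum_eq_zero fun c _ => ?_
          by_cases hcb : c = s - b
          · by_cases hca : c = s - a
            · exact absurd (by linear_combination hca - hcb) hab
            · rw [if_neg hca, zero_mul]
          · rw [if_neg hcb, mul_zero]
        rw [hz, mul_zero, mul_zero]
    · ext a b
      simp only [Matrix.of_apply, Pi.smul_apply, smul_eq_mul, Matrix.smul_apply,
        Matrix.one_apply]
      have hterm : ∀ c : ZMod d,
          t * (if a = s - c then ((d : ℂ))⁻¹ else 0)
            * star (t * (if b = s - c then ((d : ℂ))⁻¹ else 0))
          = (t * t) * ((if a = s - c then ((d : ℂ))⁻¹ else 0)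
              * (if b = s - c then ((d : ℂ))⁻¹ else 0)) := by
        intro c
        rw [star_mul', hst]
        have : star (if b = s - c then ((d : ℂ))⁻¹ else 0)
            = (if b = s - c then ((d : ℂ))⁻¹ else 0) := by
          split
          · rw [star_inv₀, Complex.star_def, Complex.conj_natCast]
          · exact star_zero _
        rw [this]; ring
      rw [Finset.sum_congr rfl (fun c _ => hterm c), ← Finset.mul_sum, htt]
      by_cases hab : a = b
      · subst hab
        rw [if_pos rfl]
        have hcond : a = s - (s - a) := by ring
        rw [Finset.sum_eq_single (s - a)]
        · rw [if_pos hcond, mul_one, ← mul_assoc, mul_inv_cancel₀ hd0, one_mul]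
        · intro c _ hc
          rw [if_neg (fun h => hc (by linear_combination h)), zero_mul]
        · intro h; exact absurd (Finset.mem_univ _) h
      · rw [if_neg hab]
        have hz : (∑ c : ZMod d, ((if a = s - c then ((d : ℂ))⁻¹ else 0)
            * (if b = s - c then ((d : ℂ))⁻¹ else 0))) = 0 := by
          refine Finset.sum_eq_zero fun c _ => ?_
          by_cases hcb : b = s - c
          · by_cases hca : a = s - c
            · exact absurd (hca.trans hcb.symm) hab
            · rw [if_neg hca, zero_mul]
          · rw [if_neg hcb, mul_zero]
        rw [hz, mul_zero, mul_zero]
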